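/- arXiv:1909.04636 — 2 statements merged into one kernel-verified Lean document; each statement's English description precedes it below -/
import Mathlib

section
/- Let (Ω, Σ, μ) be a probability space, T a measure-preserving transformation, and p a T-invariant measurable exponent with 1 < p⁻ ≤ p⁺ < ∞. For f ∈ L^{p(·),θ}(Ω) (θ > 0), the Birkhoff averages A_n f(x) = (1/n) Σ_{j=0}^{n−1} f(T^j(x)) converge μ-almost everywhere to a limit f_av, and f_av ∈ L^{p(·),θ}(Ω) with ‖f_av‖_{p(·),θ} ≤ ‖f‖_{p(·),θ}. -/
open MeasureTheory ENNReal Filter Topology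
set_option linter.unusedSectionVars false
set_option maxHeartbeats 1000000

/-- Luxemburg norm for a variable exponent `p` over measure `μ`. -/
noncomputable def luxNorm {Ω : Type*} [MeasurableSpace Ω] (μ : Measure Ω)
    (p : Ω → ℝ) (f : Ω → ℝ) : ℝ≥0∞ :=
  sInf {c : ℝ≥0∞ | 0 < c ∧ ∫⁻ x, (ENNReal.ofReal |f x| / c) ^ (p x) ∂μ ≤ 1}

/-- Grand variable exponent Lebesgue "norm" with parameter `θ`. -/
noncomputable def grandNorm {Ω : Type*} [MeasurableSpace Ω] (μ : Measure Ω)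
    (p : Ω → ℝ) (θ : ℝ) (f : Ω → ℝ) : ℝ≥0∞ :=
  ⨆ ε ∈ Set.Ioo (0:ℝ) (essInf p μ - 1),
    ENNReal.ofReal (ε ^ (θ / (essInf p μ - ε))) * luxNorm μ (fun x => p x - ε) f

section All
variable {Ω : Type*} [MeasurableSpace Ω] {T : Ω → Ω}

noncomputable def bS (T : Ω → Ω) (g : Ω → ℝ) (n : ℕ) (x : Ω) : ℝ := ∑ j ∈ Finset.range n, g (T^[j] x)

noncomputable def bA (T : Ω → Ω) (g : Ω → ℝ) (n : ℕ) (x : Ω) : ℝ := (n:ℝ)⁻¹ * bS T g n x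

noncomputable def bM (T : Ω → Ω) (g : Ω → ℝ) : ℕ → Ω → ℝ
  | 0, _ => 0
  | (N+1), x => max (bM T g N x) (bS T g (N+1) x)

lemma bS_succ (g : Ω → ℝ) (n : ℕ) (x : Ω) :
    bS T g (n+1) x = g x + bS T g n (T x) := by
  simp only [bS, Finset.sum_range_succ']
  simp [Function.iterate_succ_apply, add_comm]

lemma bM_nonneg (g : Ω → ℝ) (N : ℕ) (x : Ω) : 0 ≤ bM T g N x := by
  induction N with
  | zero => simp [bM]
  | succ N ih => exact le_trans ih (le_max_left _ _)

lemma bM_mono (g : Ω → ℝ) {M N : ℕ} (h : M ≤ N) (x : Ω) : bM T g M x ≤ bM T g N x := by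
  induction N with
  | zero => simp [Nat.le_zero.mp h]
  | succ N ih =>
    rcases Nat.le_succ_iff.mp h with h' | h'
    · exact le_trans (ih h') (le_max_left _ _)
    · simp [h']

lemma bS_le_bM (g : Ω → ℝ) {n N : ℕ} (h : n ≤ N) (x : Ω) : bS T g n x ≤ bM T g N x := by
  refine le_trans ?_ (bM_mono g h x)
  cases n with
  | zero => simp [bS, bM]
  | succ n => exact le_max_right _ _

lemma bM_pos_iff (g : Ω → ℝ) (N : ℕ) (x : Ω) :
    0 < bM T g N x ↔ ∃ n, n ≤ N ∧ 0 < bS T g n x := by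
  induction N with
  | zero =>
    simp only [bM, lt_self_iff_false, false_iff]
    rintro ⟨n, hn, hpos⟩
    rw [Nat.le_zero.mp hn] at hpos
    simp [bS] at hpos
  | succ N ih =>
    constructor
    · intro h
      rcases lt_max_iff.mp h with h' | h'
      · obtain ⟨n, hn, hp⟩ := ih.mp h'
        exact ⟨n, hn.trans (Nat.le_succ _), hp⟩
      · exact ⟨N+1, le_rfl, h'⟩
    · rintro ⟨n, hn, hp⟩
      rcases Nat.le_succ_iff.mp hn with h' | h'
      · exact lt_max_iff.mpr (Or.inl (ih.mpr ⟨n, h', hp⟩))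
      · subst h'; exact lt_max_iff.mpr (Or.inr hp)

/-- Key pointwise inequality (Garsia). -/
lemma bM_le (g : Ω → ℝ) (N : ℕ) (x : Ω) (h : 0 < bM T g N x) :
    bM T g N x ≤ g x + bM T g N (T x) := by
  -- bM N x = bS n x for some 1 ≤ n ≤ N
  have : ∃ n, 1 ≤ n ∧ n ≤ N ∧ bM T g N x = bS T g n x := by
    induction N with
    | zero => simp [bM] at h
    | succ N ih =>
      rcases le_total (bS T g (N+1) x) (bM T g N x) with h' | h'
      · have hm : bM T g (N+1) x = bM T g N x := max_eq_left h'
        rw [hm] at h ⊢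
        obtain ⟨n, h1, h2, h3⟩ := ih h
        exact ⟨n, h1, h2.trans (Nat.le_succ _), h3⟩
      · exact ⟨N+1, Nat.succ_le_succ (Nat.zero_le _), le_rfl, max_eq_right h'⟩
  obtain ⟨n, h1, hn, hEq⟩ := this
  rw [hEq]
  obtain ⟨m, rfl⟩ := Nat.exists_eq_add_of_le h1
  rw [add_comm 1 m, bS_succ]
  have hm : m ≤ N := le_trans (by omega) hn
  exact add_le_add le_rfl (bS_le_bM g hm (T x))

variable {μ : Measure Ω} [IsProbabilityMeasure μ]

lemma integrable_comp_mp (hT : MeasurePreserving T μ μ) {g : Ω → ℝ} (hgi : Integrable g μ) :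
    Integrable (fun x => g (T x)) μ :=
  memLp_one_iff_integrable.mp ((memLp_one_iff_integrable.mpr hgi).comp_measurePreserving hT)

lemma integral_comp_mp (hT : MeasurePreserving T μ μ) {g : Ω → ℝ}
    (hg : AEStronglyMeasurable g μ) : ∫ x, g (T x) ∂μ = ∫ x, g x ∂μ := by
  rw [← MeasureTheory.integral_map hT.measurable.aemeasurable (hT.map_eq.symm ▸ hg), hT.map_eq]

lemma bS_measurable (hT : Measurable T) {g : Ω → ℝ} (hg : Measurable g) (n : ℕ) :
    Measurable (bS T g n) :=
  Finset.measurable_sum _ fun j _ => hg.comp (hT.iterate j)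

lemma bS_integrable (hT : MeasurePreserving T μ μ) {g : Ω → ℝ} (hgi : Integrable g μ) (n : ℕ) :
    Integrable (bS T g n) μ :=
  integrable_finset_sum _ fun j _ =>
    memLp_one_iff_integrable.mp ((memLp_one_iff_integrable.mpr hgi).comp_measurePreserving (hT.iterate j))

lemma bM_measurable (hT : Measurable T) {g : Ω → ℝ} (hg : Measurable g) (N : ℕ) :
    Measurable (bM T g N) := by
  induction N with
  | zero => exact measurable_const
  | succ N ih => exact ih.max (bS_measurable hT hg (N+1))

lemma bM_integrable (hT : MeasurePreserving T μ μ) {g : Ω → ℝ} (hgi : Integrable g μ) (N : ℕ) :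
    Integrable (bM T g N) μ := by
  induction N with
  | zero => simpa [bM] using integrable_const (0:ℝ)
  | succ N ih => exact ih.sup (bS_integrable hT hgi (N+1))

/-- Maximal ergodic theorem, fixed N. -/
lemma maximal_N (hT : MeasurePreserving T μ μ) {g : Ω → ℝ} (hg : Measurable g)
    (hgi : Integrable g μ) (N : ℕ) :
    0 ≤ ∫ x in {x | 0 < bM T g N x}, g x ∂μ := by
  set A := {x | 0 < bM T g N x} with hA_def
  have hA : MeasurableSet A := measurableSet_lt measurable_const (bM_measurable hT.measurable hg N)
  have hMi : Integrable (bM T g N) μ := bM_integrable hT hgi N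
  have hMTi : Integrable (fun x => bM T g N (T x)) μ := integrable_comp_mp hT hMi
  have step1 : ∫ x in A, (bM T g N x - bM T g N (T x)) ∂μ ≤ ∫ x in A, g x ∂μ := by
    refine setIntegral_mono_on ((hMi.sub hMTi).integrableOn) (hgi.integrableOn) hA ?_
    intro x hx
    have := bM_le g N x hx
    linarith
  have e1 : ∫ x in A, bM T g N x ∂μ = ∫ x, bM T g N x ∂μ := by
    rw [← integral_indicator hA]
    congr 1
    funext x
    by_cases hx : x ∈ A
    · simp [hx]
    · have h0 : bM T g N x = 0 :=
        le_antisymm (not_lt.mp hx) (bM_nonneg g N x)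
      simp [hx, h0]
  have e2 : ∫ x in A, bM T g N (T x) ∂μ ≤ ∫ x, bM T g N (T x) ∂μ :=
    setIntegral_le_integral hMTi (Eventually.of_forall fun x => bM_nonneg g N (T x))
  have e3 : ∫ x, bM T g N (T x) ∂μ = ∫ x, bM T g N x ∂μ :=
    integral_comp_mp hT hMi.aestronglyMeasurable
  have step2 : 0 ≤ ∫ x in A, (bM T g N x - bM T g N (T x)) ∂μ := by
    rw [integral_sub hMi.integrableOn hMTi.integrableOn, e1]
    linarith [e2, e3 ▸ e2]
  linarith

/-- Maximal ergodic theorem. -/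
lemma maximal (hT : MeasurePreserving T μ μ) {g : Ω → ℝ} (hg : Measurable g)
    (hgi : Integrable g μ) :
    0 ≤ ∫ x in {x | ∃ n, 0 < bS T g n x}, g x ∂μ := by
  have hmono : Monotone (fun N => {x | 0 < bM T g N x}) := by
    intro M N h x hx
    exact lt_of_lt_of_le hx (bM_mono g h x)
  have hmeas : ∀ N, MeasurableSet {x | 0 < bM T g N x} := fun N =>
    measurableSet_lt measurable_const (bM_measurable hT.measurable hg N)
  have hUnion : (⋃ N, {x | 0 < bM T g N x}) = {x | ∃ n, 0 < bS T g n x} := by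
    ext x
    simp only [Set.mem_iUnion, Set.mem_setOf_eq]
    constructor
    · rintro ⟨N, hN⟩
      obtain ⟨n, _, hn⟩ := (bM_pos_iff g N x).mp hN
      exact ⟨n, hn⟩
    · rintro ⟨n, hn⟩
      exact ⟨n, (bM_pos_iff g n x).mpr ⟨n, le_rfl, hn⟩⟩
  have := tendsto_setIntegral_of_monotone hmeas hmono (hUnion ▸ hgi.integrableOn :
    IntegrableOn g (⋃ N, {x | 0 < bM T g N x}) μ)
  rw [hUnion] at this
  exact ge_of_tendsto' this fun N => maximal_N hT hg hgi N

lemma ereal_limsup_le_of_le_tendsto {v w : ℕ → ℝ} {r : ℝ}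
    (h : ∀ᶠ n in atTop, v n ≤ w n) (hw : Tendsto w atTop (𝓝 r)) :
    limsup (fun n => (v n : EReal)) atTop ≤ (r : EReal) := by
  have h1 : limsup (fun n => (v n : EReal)) atTop ≤ limsup (fun n => (w n : EReal)) atTop :=
    limsup_le_limsup (h.mono fun n hn => EReal.coe_le_coe_iff.mpr hn)
  have h2 : Tendsto (fun n => (w n : EReal)) atTop (𝓝 (r : EReal)) :=
    EReal.tendsto_coe.mpr hw
  exact h1.trans_eq h2.limsup_eq
lemma tendsto_inv_nat : Tendsto (fun n : ℕ => (n:ℝ)⁻¹) atTop (𝓝 0) :=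
  tendsto_inv_atTop_zero.comp tendsto_natCast_atTop_atTop

lemma tendsto_inv_nat_succ : Tendsto (fun n : ℕ => ((n:ℝ)+1)⁻¹) atTop (𝓝 0) :=
  tendsto_inv_atTop_zero.comp (tendsto_atTop_add_const_right _ 1 tendsto_natCast_atTop_atTop)

/-- first comparison: `limsup A_n(Tx) ≤ limsup A_n(x)` -/
lemma limsup_bA_comp_le (g : Ω → ℝ) (x : Ω) :
    limsup (fun n => (bA T g n (T x) : EReal)) atTop ≤
      limsup (fun n => (bA T g n x : EReal)) atTop := by
  by_contra hlt
  push_neg at hlt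
  obtain ⟨r, hr1, hr2⟩ := EReal.exists_between_coe_real hlt
  have hev' : ∀ᶠ n in atTop, bA T g n x < r :=
    (eventually_lt_of_limsup_lt hr1).mono fun n hn => EReal.coe_lt_coe_iff.mp hn
  have hev2 : ∀ᶠ n in atTop, bA T g (n+1) x < r := by
    obtain ⟨N, hN⟩ := eventually_atTop.mp hev'
    exact eventually_atTop.mpr ⟨N, fun n hn => hN (n+1) (hn.trans (Nat.le_succ _))⟩
  have key : ∀ᶠ n in atTop, bA T g n (T x) ≤ (1 + (n:ℝ)⁻¹) * r + |g x| * (n:ℝ)⁻¹ := by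
    filter_upwards [hev2, eventually_ge_atTop 1] with n hn hn1
    have hn0 : (0:ℝ) < n := by exact_mod_cast hn1
    have h1 : (0:ℝ) < (n:ℝ)+1 := by linarith
    have hcast : (((n+1 : ℕ)):ℝ) = (n:ℝ)+1 := by push_cast; ring
    rw [bA, hcast] at hn
    have hs : bS T g (n+1) x < ((n:ℝ)+1) * r := by
      have h2 := mul_lt_mul_of_pos_left hn h1
      rwa [mul_inv_cancel_left₀ (ne_of_gt h1)] at h2
    have hbs : bS T g n (T x) = bS T g (n+1) x - g x := by
      rw [bS_succ]; ring
    rw [bA, hbs]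
    have h2 : bS T g (n+1) x - g x ≤ ((n:ℝ)+1) * r + |g x| := by
      nlinarith [neg_abs_le (g x)]
    calc (n:ℝ)⁻¹ * (bS T g (n+1) x - g x) ≤ (n:ℝ)⁻¹ * (((n:ℝ)+1) * r + |g x|) :=
          mul_le_mul_of_nonneg_left h2 (by positivity)
      _ = (1 + (n:ℝ)⁻¹) * r + |g x| * (n:ℝ)⁻¹ := by field_simp
  have hw : Tendsto (fun n : ℕ => (1 + (n:ℝ)⁻¹) * r + |g x| * (n:ℝ)⁻¹) atTop (𝓝 r) := by
    have := (((tendsto_const_nhds (x := (1:ℝ))).add tendsto_inv_nat).mul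
      (tendsto_const_nhds (x := r))).add
      ((tendsto_const_nhds (x := |g x|)).mul tendsto_inv_nat)
    simpa using this
  exact absurd (ereal_limsup_le_of_le_tendsto key hw) (not_le.mpr hr2)

/-- second comparison: `limsup A_n(x) ≤ limsup A_n(Tx)` -/
lemma limsup_bA_le_comp (g : Ω → ℝ) (x : Ω) :
    limsup (fun n => (bA T g n x : EReal)) atTop ≤
      limsup (fun n => (bA T g n (T x) : EReal)) atTop := by
  by_contra hlt
  push_neg at hlt
  obtain ⟨r, hr1, hr2⟩ := EReal.exists_between_coe_real hlt
  have hev' : ∀ᶠ n in atTop, bA T g n (T x) < r :=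
    (eventually_lt_of_limsup_lt hr1).mono fun n hn => EReal.coe_lt_coe_iff.mp hn
  have key : ∀ᶠ n in atTop, bA T g (n+1) x ≤
      ((n:ℝ)+1)⁻¹ * |g x| + (1 - ((n:ℝ)+1)⁻¹) * r := by
    filter_upwards [hev', eventually_ge_atTop 1] with n hn hn1
    have hn0 : (0:ℝ) < n := by exact_mod_cast hn1
    have h1 : (0:ℝ) < (n:ℝ)+1 := by linarith
    rw [bA] at hn
    have hbs : bS T g n (T x) < (n:ℝ) * r := by
      have h2 := mul_lt_mul_of_pos_left hn hn0
      rwa [mul_inv_cancel_left₀ (ne_of_gt hn0)] at h2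
    have hcast : (((n+1 : ℕ)):ℝ) = (n:ℝ)+1 := by push_cast; ring
    rw [bA, hcast, bS_succ]
    have h2 : g x + bS T g n (T x) ≤ |g x| + (n:ℝ) * r := by
      nlinarith [le_abs_self (g x)]
    calc ((n:ℝ)+1)⁻¹ * (g x + bS T g n (T x)) ≤ ((n:ℝ)+1)⁻¹ * (|g x| + (n:ℝ) * r) :=
          mul_le_mul_of_nonneg_left h2 (by positivity)
      _ = ((n:ℝ)+1)⁻¹ * |g x| + (1 - ((n:ℝ)+1)⁻¹) * r := by field_simp; ring
  have hw : Tendsto (fun n : ℕ => ((n:ℝ)+1)⁻¹ * |g x| + (1 - ((n:ℝ)+1)⁻¹) * r)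
      atTop (𝓝 r) := by
    have := (tendsto_inv_nat_succ.mul (tendsto_const_nhds (x := |g x|))).add
      (((tendsto_const_nhds (x := (1:ℝ))).sub tendsto_inv_nat_succ).mul
        (tendsto_const_nhds (x := r)))
    simpa using this
  have hshift : limsup (fun n => (bA T g (n+1) x : EReal)) atTop =
      limsup (fun n => (bA T g n x : EReal)) atTop :=
    limsup_nat_add (fun n => (bA T g n x : EReal)) 1
  have := ereal_limsup_le_of_le_tendsto key hw
  rw [hshift] at this
  exact absurd this (not_le.mpr hr2)

lemma limsup_bA_comp (g : Ω → ℝ) (x : Ω) :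
    limsup (fun n => (bA T g n (T x) : EReal)) atTop =
      limsup (fun n => (bA T g n x : EReal)) atTop :=
  le_antisymm (limsup_bA_comp_le g x) (limsup_bA_le_comp g x)


lemma bS_neg (g : Ω → ℝ) (n : ℕ) (x : Ω) : bS T (fun y => -g y) n x = -bS T g n x := by
  simp [bS, Finset.sum_neg_distrib]

lemma bA_neg (g : Ω → ℝ) (n : ℕ) (x : Ω) : bA T (fun y => -g y) n x = -bA T g n x := by
  simp [bA, bS_neg]

lemma liminf_bA_eq_neg (g : Ω → ℝ) (x : Ω) :
    liminf (fun n => (bA T g n x : EReal)) atTop =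
      - limsup (fun n => (bA T (fun y => -g y) n x : EReal)) atTop := by
  rw [← EReal.liminf_neg]
  congr 1
  funext n
  simp [bA_neg]

lemma liminf_bA_comp (g : Ω → ℝ) (x : Ω) :
    liminf (fun n => (bA T g n (T x) : EReal)) atTop =
      liminf (fun n => (bA T g n x : EReal)) atTop := by
  rw [liminf_bA_eq_neg, liminf_bA_eq_neg, limsup_bA_comp]

variable {μ : Measure Ω} [IsProbabilityMeasure μ]

/-- Key estimate: on a forward-invariant set where sums frequently exceed `n*b`,
the average of `f` is at least `b`. -/
lemma setEstimate (hT : MeasurePreserving T μ μ) {f : Ω → ℝ} (hf : Measurable f)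
    (hfi : Integrable f μ) {E : Set Ω} (hE : MeasurableSet E) (hinv : Set.MapsTo T E E)
    {b : ℝ} (hfreq : ∀ x ∈ E, ∃ n : ℕ, (n:ℝ) * b < bS T f n x) :
    b * (μ E).toReal ≤ ∫ x in E, f x ∂μ := by
  set h : Ω → ℝ := E.indicator (fun x => f x - b) with hh
  have hhm : Measurable h := (hf.sub measurable_const).indicator hE
  have hhi : Integrable h μ := (hfi.sub (integrable_const b)).indicator hE
  have hSh : ∀ x ∈ E, ∀ n, bS T h n x = bS T f n x - n * b := by
    intro x hx n
    have hiter : ∀ j, T^[j] x ∈ E := fun j => hinv.iterate j hx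
    simp only [bS]
    rw [Finset.sum_congr rfl (fun j _ => by
      rw [hh, Set.indicator_of_mem (hiter j)])]
    rw [Finset.sum_sub_distrib]
    simp [mul_comm]
  set D : Set Ω := {x | ∃ n, 0 < bS T h n x} with hD
  have hED : E ⊆ D := by
    intro x hx
    obtain ⟨n, hn⟩ := hfreq x hx
    exact ⟨n, by rw [hSh x hx n]; linarith⟩
  have hmax : 0 ≤ ∫ x in D, h x ∂μ := maximal hT hhm hhi
  have : ∫ x in D, h x ∂μ = ∫ x in E, (f x - b) ∂μ := by
    rw [hh, setIntegral_indicator hE, Set.inter_eq_self_of_subset_right hED]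
  rw [this] at hmax
  rw [integral_sub hfi.integrableOn (integrableOn_const (measure_lt_top μ E).ne)] at hmax
  simp only [integral_const, smul_eq_mul] at hmax
  rw [measureReal_restrict_apply_univ, measureReal_def] at hmax
  linarith [hmax]

/-- The oscillation set has measure zero. -/
lemma E_null (hT : MeasurePreserving T μ μ) {f : Ω → ℝ} (hf : Measurable f)
    (hfi : Integrable f μ) {a b : ℝ} (hab : a < b) :
    μ {x | liminf (fun n => (bA T f n x : EReal)) atTop < (a : EReal) ∧
        (b : EReal) < limsup (fun n => (bA T f n x : EReal)) atTop} = 0 := by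
  set E := {x | liminf (fun n => (bA T f n x : EReal)) atTop < (a : EReal) ∧
      (b : EReal) < limsup (fun n => (bA T f n x : EReal)) atTop} with hEdef
  have hbA_meas : ∀ n, Measurable fun x => (bA T f n x : EReal) := fun n =>
    measurable_coe_real_ereal.comp
      ((Finset.measurable_sum _ fun j _ => hf.comp (hT.measurable.iterate j)).const_mul _)
  have hE : MeasurableSet E :=
    (measurableSet_lt (α := EReal) (Measurable.liminf hbA_meas) measurable_const).inter
      (measurableSet_lt (α := EReal) measurable_const (Measurable.limsup hbA_meas))
  have hinv : Set.MapsTo T E E := by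
    intro x hx
    obtain ⟨h1, h2⟩ := hx
    refine ⟨?_, ?_⟩
    · show liminf (fun n => (bA T f n (T x) : EReal)) atTop < (a : EReal)
      rwa [liminf_bA_comp]
    · show (b : EReal) < limsup (fun n => (bA T f n (T x) : EReal)) atTop
      rwa [limsup_bA_comp]
  -- upper estimate: b μ E ≤ ∫_E f
  have hub : b * (μ E).toReal ≤ ∫ x in E, f x ∂μ := by
    refine setEstimate hT hf hfi hE hinv ?_
    intro x hx
    have h2 := hx.2
    have hfreq : ∃ᶠ n in atTop, (b : EReal) < (bA T f n x : EReal) :=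
      frequently_lt_of_lt_limsup (by isBoundedDefault) h2
    obtain ⟨n, hn1, hn2⟩ := (hfreq.and_eventually (eventually_ge_atTop 1)).exists
    refine ⟨n, ?_⟩
    have hblt : b < bA T f n x := EReal.coe_lt_coe_iff.mp hn1
    have hn0 : (0:ℝ) < n := by exact_mod_cast hn2
    have := mul_lt_mul_of_pos_left hblt hn0
    rwa [bA, mul_inv_cancel_left₀ (ne_of_gt hn0)] at this
  -- lower estimate: ∫_E f ≤ a μ E  via -f
  have hlb : ∫ x in E, f x ∂μ ≤ a * (μ E).toReal := by
    have hest := setEstimate hT hf.neg hfi.neg hE hinv (b := -a) ?_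
    · simp only [Pi.neg_apply, integral_neg] at hest
      linarith
    · intro x hx
      have h1 := hx.1
      rw [liminf_bA_eq_neg] at h1
      have h1' : ((-a : ℝ) : EReal) < limsup (fun n => (bA T (fun y => -f y) n x : EReal)) atTop := by
        rw [EReal.coe_neg]
        exact EReal.neg_lt_of_neg_lt h1
      have hfreq : ∃ᶠ n in atTop, ((-a : ℝ) : EReal) <
          (bA T (fun y => -f y) n x : EReal) :=
        frequently_lt_of_lt_limsup (by isBoundedDefault) h1'
      obtain ⟨n, hn1, hn2⟩ := (hfreq.and_eventually (eventually_ge_atTop 1)).exists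
      refine ⟨n, ?_⟩
      have hblt : -a < bA T (fun y => -f y) n x := EReal.coe_lt_coe_iff.mp hn1
      have hn0 : (0:ℝ) < n := by exact_mod_cast hn2
      have := mul_lt_mul_of_pos_left hblt hn0
      rwa [bA, mul_inv_cancel_left₀ (ne_of_gt hn0)] at this
  have ht : (μ E).toReal = 0 := by nlinarith [ENNReal.toReal_nonneg (a := μ E)]
  exact (ENNReal.toReal_eq_zero_iff _).mp ht |>.resolve_right (measure_ne_top μ E)


lemma ofReal_abs_bA_le {f : Ω → ℝ} {n : ℕ} (hn : 0 < n) (x : Ω) :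
    ENNReal.ofReal |bA T f n x| ≤
      ((n:ℝ≥0∞))⁻¹ * ∑ j ∈ Finset.range n, ENNReal.ofReal |f (T^[j] x)| := by
  have hn0 : (0:ℝ) < n := by exact_mod_cast hn
  have h1 : |bA T f n x| ≤ (n:ℝ)⁻¹ * ∑ j ∈ Finset.range n, |f (T^[j] x)| := by
    rw [bA, abs_mul, abs_inv, abs_of_nonneg (le_of_lt hn0)]
    exact mul_le_mul_of_nonneg_left (Finset.abs_sum_le_sum_abs _ _) (by positivity)
  calc ENNReal.ofReal |bA T f n x|
      ≤ ENNReal.ofReal ((n:ℝ)⁻¹ * ∑ j ∈ Finset.range n, |f (T^[j] x)|) :=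
        ENNReal.ofReal_le_ofReal h1
    _ = ENNReal.ofReal ((n:ℝ)⁻¹) * ENNReal.ofReal (∑ j ∈ Finset.range n, |f (T^[j] x)|) :=
        ENNReal.ofReal_mul (by positivity)
    _ = ((n:ℝ≥0∞))⁻¹ * ∑ j ∈ Finset.range n, ENNReal.ofReal |f (T^[j] x)| := by
        rw [ENNReal.ofReal_inv_of_pos hn0, ENNReal.ofReal_natCast,
          ENNReal.ofReal_sum_of_nonneg (fun j _ => abs_nonneg _)]

lemma lintegral_ofReal_abs_bA_le (hT : MeasurePreserving T μ μ) {f : Ω → ℝ}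
    (hf : Measurable f) (n : ℕ) :
    ∫⁻ x, ENNReal.ofReal |bA T f n x| ∂μ ≤ ∫⁻ x, ENNReal.ofReal |f x| ∂μ := by
  rcases Nat.eq_zero_or_pos n with rfl | hn
  · simp [bA]
  have hpt : ∀ x, ENNReal.ofReal |bA T f n x| ≤
      ((n:ℝ≥0∞))⁻¹ * ∑ j ∈ Finset.range n, ENNReal.ofReal |f (T^[j] x)| :=
    fun x => ofReal_abs_bA_le hn x
  have hFmeas : ∀ j : ℕ, Measurable fun x : Ω => ENNReal.ofReal |f (T^[j] x)| := fun j =>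
    ((hf.comp (hT.measurable.iterate j)).abs).ennreal_ofReal
  calc ∫⁻ x, ENNReal.ofReal |bA T f n x| ∂μ
      ≤ ∫⁻ x, ((n:ℝ≥0∞))⁻¹ * ∑ j ∈ Finset.range n, ENNReal.ofReal |f (T^[j] x)| ∂μ :=
        lintegral_mono hpt
    _ = ((n:ℝ≥0∞))⁻¹ * ∑ j ∈ Finset.range n, ∫⁻ x, ENNReal.ofReal |f (T^[j] x)| ∂μ := by
        rw [lintegral_const_mul _ (Finset.measurable_sum _ fun j _ => hFmeas j),
          lintegral_finset_sum _ fun j _ => hFmeas j]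
    _ = ((n:ℝ≥0∞))⁻¹ * ∑ j ∈ Finset.range n, ∫⁻ x, ENNReal.ofReal |f x| ∂μ := by
        congr 1
        refine Finset.sum_congr rfl fun j _ => ?_
        exact (hT.iterate j).lintegral_comp (ENNReal.measurable_ofReal.comp hf.abs)
    _ = ((n:ℝ≥0∞))⁻¹ * ((n : ℝ≥0∞) * ∫⁻ x, ENNReal.ofReal |f x| ∂μ) := by
        rw [Finset.sum_const, Finset.card_range, nsmul_eq_mul]
    _ = ∫⁻ x, ENNReal.ofReal |f x| ∂μ := by
        rw [← mul_assoc, ENNReal.inv_mul_cancel (by exact_mod_cast hn.ne' : (n:ℝ≥0∞) ≠ 0)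
          (ENNReal.natCast_ne_top n), one_mul]

/-- Birkhoff pointwise ergodic theorem: a.e. convergence of the averages. -/
lemma birkhoff_ae (hT : MeasurePreserving T μ μ) {f : Ω → ℝ} (hf : Measurable f)
    (hfi : Integrable f μ) :
    ∃ fav : Ω → ℝ, ∀ᵐ x ∂μ, Tendsto (fun n => bA T f n x) atTop (𝓝 (fav x)) := by
  have hbA_meas : ∀ n, Measurable fun x => bA T f n x := fun n =>
    (Finset.measurable_sum _ fun j _ => hf.comp (hT.measurable.iterate j)).const_mul _
  have hI : ∫⁻ x, ENNReal.ofReal |f x| ∂μ < ⊤ := by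
    have := hfi.2
    rw [hasFiniteIntegral_iff_norm] at this
    simpa [Real.norm_eq_abs] using this
  -- Fatou: liminf of |A_n| is a.e. finite
  have hG_meas : Measurable fun x => liminf (fun n => ENNReal.ofReal |bA T f n x|) atTop :=
    Measurable.liminf fun n => ENNReal.measurable_ofReal.comp (hbA_meas n).abs
  have hfatou : ∀ᵐ x ∂μ, liminf (fun n => ENNReal.ofReal |bA T f n x|) atTop < ⊤ := by
    refine ae_lt_top hG_meas (ne_of_lt (lt_of_le_of_lt ?_ hI))
    calc ∫⁻ x, liminf (fun n => ENNReal.ofReal |bA T f n x|) atTop ∂μ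
        ≤ liminf (fun n => ∫⁻ x, ENNReal.ofReal |bA T f n x| ∂μ) atTop :=
          lintegral_liminf_le fun n => ENNReal.measurable_ofReal.comp (hbA_meas n).abs
      _ ≤ ∫⁻ x, ENNReal.ofReal |f x| ∂μ :=
          liminf_le_of_frequently_le' (Frequently.of_forall fun n =>
            lintegral_ofReal_abs_bA_le hT hf n)
  have hosc : ∀ᵐ x ∂μ, ∀ q : ℚ, ∀ r : ℚ, q < r →
      ¬(liminf (fun n => (bA T f n x : EReal)) atTop < ((q:ℝ) : EReal) ∧
        (((r:ℝ)) : EReal) < limsup (fun n => (bA T f n x : EReal)) atTop) := by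
    rw [ae_all_iff]
    intro q
    rw [ae_all_iff]
    intro r
    by_cases hqr : q < r
    · have h0 := E_null hT hf hfi (by exact_mod_cast hqr : (q:ℝ) < (r:ℝ))
      have : ∀ᵐ x ∂μ, ¬(liminf (fun n => (bA T f n x : EReal)) atTop < ((q:ℝ) : EReal) ∧
          (((r:ℝ)) : EReal) < limsup (fun n => (bA T f n x : EReal)) atTop) := by
        rw [ae_iff]
        simpa [not_not] using h0
      exact this.mono fun x hx _ => hx
    · exact Eventually.of_forall fun x h => absurd h hqr
  have key : ∀ᵐ x ∂μ, ∃ l : ℝ, Tendsto (fun n => bA T f n x) atTop (𝓝 l) := by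
    filter_upwards [hfatou, hosc] with x h2 h1
    set L := limsup (fun n => (bA T f n x : EReal)) atTop with hL
    set I' := liminf (fun n => (bA T f n x : EReal)) atTop with hI'
    have hle : I' ≤ L := liminf_le_limsup
    have heq : I' = L := by
      by_contra hne
      have hlt : I' < L := lt_of_le_of_ne hle hne
      obtain ⟨y, hy1, hy2⟩ := EReal.exists_between_coe_real hlt
      obtain ⟨z, hz1, hz2⟩ := EReal.exists_between_coe_real hy2
      have hyz : y < z := EReal.coe_lt_coe_iff.mp hz1
      obtain ⟨q, hq1, hq2⟩ := exists_rat_btwn hyz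
      obtain ⟨r, hr1, hr2⟩ := exists_rat_btwn hq2
      refine h1 q r (by exact_mod_cast hr1) ⟨?_, ?_⟩
      · exact hy1.trans (by exact_mod_cast hq1)
      · exact lt_trans (by exact_mod_cast hr2) hz2
    have htends : Tendsto (fun n => (bA T f n x : EReal)) atTop (𝓝 L) :=
      tendsto_of_liminf_eq_limsup heq rfl
    -- L cannot be ⊥ or ⊤
    clear_value L I'
    clear hL hI' heq hle
    induction L with
    | bot =>
      exfalso
      have hbot : Tendsto (fun n => bA T f n x) atTop atBot := by
        rw [tendsto_atBot]
        intro b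
        have := EReal.tendsto_nhds_bot_iff_real.mp htends b
        exact this.mono fun n hn => le_of_lt (EReal.coe_lt_coe_iff.mp hn)
      have habs : Tendsto (fun n => |bA T f n x|) atTop atTop :=
        tendsto_abs_atBot_atTop.comp hbot
      have : Tendsto (fun n => ENNReal.ofReal |bA T f n x|) atTop (𝓝 ⊤) :=
        ENNReal.tendsto_ofReal_atTop.comp habs
      rw [this.liminf_eq] at h2
      exact lt_irrefl _ h2
    | coe l =>
      exact ⟨l, EReal.tendsto_coe.mp htends⟩
    | top =>
      exfalso
      have htop : Tendsto (fun n => bA T f n x) atTop atTop := by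
        rw [tendsto_atTop]
        intro b
        have := EReal.tendsto_nhds_top_iff_real.mp htends b
        exact this.mono fun n hn => le_of_lt (EReal.coe_lt_coe_iff.mp hn)
      have habs : Tendsto (fun n => |bA T f n x|) atTop atTop :=
        tendsto_abs_atTop_atTop.comp htop
      have : Tendsto (fun n => ENNReal.ofReal |bA T f n x|) atTop (𝓝 ⊤) :=
        ENNReal.tendsto_ofReal_atTop.comp habs
      rw [this.liminf_eq] at h2
      exact lt_irrefl _ h2
  classical
  refine ⟨fun x => if h : ∃ l : ℝ, Tendsto (fun n => bA T f n x) atTop (𝓝 l)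
    then h.choose else 0, ?_⟩
  filter_upwards [key] with x hx
  rw [dif_pos hx]
  exact hx.choose_spec


lemma q_iterate_ae (hT : MeasurePreserving T μ μ) {q : Ω → ℝ} (hqT : q ∘ T =ᵐ[μ] q)
    (j : ℕ) : (fun x => q (T^[j] x)) =ᵐ[μ] q := by
  induction j with
  | zero => simp
  | succ j ih =>
    have h1 : (fun x => q (T^[j+1] x)) = (fun x => q (T^[j] x)) ∘ T := by
      funext x
      simp [Function.iterate_succ_apply]
    rw [h1]
    exact (hT.quasiMeasurePreserving.ae_eq_comp ih).trans hqT

/-- modular of Birkhoff averages is controlled. -/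
lemma modular_bA_le (hT : MeasurePreserving T μ μ) {f : Ω → ℝ} (hf : Measurable f)
    {q : Ω → ℝ} (hq : Measurable q) (hq1 : ∀ᵐ x ∂μ, 1 ≤ q x) (hqT : q ∘ T =ᵐ[μ] q)
    {c : ℝ≥0∞}
    (hint : ∫⁻ x, (ENNReal.ofReal |f x| / c) ^ (q x) ∂μ ≤ 1) (n : ℕ) :
    ∫⁻ x, (ENNReal.ofReal |bA T f n x| / c) ^ (q x) ∂μ ≤ 1 := by
  rcases Nat.eq_zero_or_pos n with rfl | hn
  · have : ∫⁻ x, (ENNReal.ofReal |bA T f 0 x| / c) ^ (q x) ∂μ = 0 := by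
      rw [← lintegral_zero]
      refine lintegral_congr_ae (hq1.mono fun x hx => ?_)
      show (ENNReal.ofReal |bA T f 0 x| / c) ^ (q x) = 0
      rw [show bA T f 0 x = 0 by simp [bA], abs_zero, ENNReal.ofReal_zero,
        ENNReal.zero_div]
      exact ENNReal.zero_rpow_of_pos (by linarith)
    simp [this]
  -- pointwise convexity bound
  have hptw : ∀ᵐ x ∂μ, (ENNReal.ofReal |bA T f n x| / c) ^ (q x) ≤
      ∑ j ∈ Finset.range n, ((n:ℝ≥0∞))⁻¹ *
        ((ENNReal.ofReal |f (T^[j] x)| / c) ^ (q x)) := by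
    refine hq1.mono fun x hx => ?_
    have hbase : ENNReal.ofReal |bA T f n x| / c ≤
        ∑ j ∈ Finset.range n, ((n:ℝ≥0∞))⁻¹ * (ENNReal.ofReal |f (T^[j] x)| / c) := by
      have h1 := ofReal_abs_bA_le (T := T) (f := f) hn x
      calc ENNReal.ofReal |bA T f n x| / c
          ≤ (((n:ℝ≥0∞))⁻¹ * ∑ j ∈ Finset.range n, ENNReal.ofReal |f (T^[j] x)|) / c :=
            ENNReal.div_le_div_right h1 c
        _ = ∑ j ∈ Finset.range n, ((n:ℝ≥0∞))⁻¹ * (ENNReal.ofReal |f (T^[j] x)| / c) := by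
            rw [div_eq_mul_inv, mul_assoc, Finset.sum_mul, Finset.mul_sum]
            simp only [div_eq_mul_inv, mul_assoc]
    calc (ENNReal.ofReal |bA T f n x| / c) ^ (q x)
        ≤ (∑ j ∈ Finset.range n, ((n:ℝ≥0∞))⁻¹ *
            (ENNReal.ofReal |f (T^[j] x)| / c)) ^ (q x) :=
          ENNReal.rpow_le_rpow hbase (by linarith)
      _ ≤ ∑ j ∈ Finset.range n, ((n:ℝ≥0∞))⁻¹ *
            ((ENNReal.ofReal |f (T^[j] x)| / c) ^ (q x)) := by
          refine ENNReal.rpow_arith_mean_le_arith_mean_rpow _ _ _ ?_ hx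
          rw [Finset.sum_const, Finset.card_range, nsmul_eq_mul]
          exact ENNReal.mul_inv_cancel (by exact_mod_cast hn.ne') (ENNReal.natCast_ne_top n)
  have hmeas : ∀ j : ℕ, Measurable fun x =>
      (ENNReal.ofReal |f (T^[j] x)| / c) ^ (q x) := fun j =>
    (((hf.comp (hT.measurable.iterate j)).abs.ennreal_ofReal).div measurable_const).pow hq
  have hg_meas : Measurable fun y => (ENNReal.ofReal |f y| / c) ^ (q y) :=
    ((hf.abs.ennreal_ofReal).div measurable_const).pow hq
  calc ∫⁻ x, (ENNReal.ofReal |bA T f n x| / c) ^ (q x) ∂μ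
      ≤ ∫⁻ x, ∑ j ∈ Finset.range n, ((n:ℝ≥0∞))⁻¹ *
          ((ENNReal.ofReal |f (T^[j] x)| / c) ^ (q x)) ∂μ := lintegral_mono_ae hptw
    _ = ∑ j ∈ Finset.range n, ((n:ℝ≥0∞))⁻¹ *
          ∫⁻ x, (ENNReal.ofReal |f (T^[j] x)| / c) ^ (q x) ∂μ := by
        rw [lintegral_finset_sum _ fun j _ => (hmeas j).const_mul _]
        exact Finset.sum_congr rfl fun j _ => lintegral_const_mul _ (hmeas j)
    _ ≤ ∑ j ∈ Finset.range n, ((n:ℝ≥0∞))⁻¹ * 1 := by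
        refine Finset.sum_le_sum fun j _ => mul_le_mul_right ?_ _
        have hae : (fun x => (ENNReal.ofReal |f (T^[j] x)| / c) ^ (q x)) =ᵐ[μ]
            (fun x => (ENNReal.ofReal |f (T^[j] x)| / c) ^ (q (T^[j] x))) :=
          (q_iterate_ae hT hqT j).mono fun x hx => by
            dsimp only at hx ⊢
            rw [hx]
        calc ∫⁻ x, (ENNReal.ofReal |f (T^[j] x)| / c) ^ (q x) ∂μ
            = ∫⁻ x, (ENNReal.ofReal |f (T^[j] x)| / c) ^ (q (T^[j] x)) ∂μ :=
              lintegral_congr_ae hae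
          _ = ∫⁻ y, (ENNReal.ofReal |f y| / c) ^ (q y) ∂μ :=
              (hT.iterate j).lintegral_comp hg_meas
          _ ≤ 1 := hint
    _ = 1 := by
        rw [Finset.sum_const, Finset.card_range, nsmul_eq_mul, mul_one]
        exact ENNReal.mul_inv_cancel (by exact_mod_cast hn.ne') (ENNReal.natCast_ne_top n)

/-- Fatou: modular of the limit is controlled. -/
lemma modular_fav_le (hT : MeasurePreserving T μ μ) {f fav : Ω → ℝ} (hf : Measurable f)
    {q : Ω → ℝ} (hq : Measurable q)
    (hconv : ∀ᵐ x ∂μ, Tendsto (fun n => bA T f n x) atTop (𝓝 (fav x)))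
    {c : ℝ≥0∞} (hc : c ≠ 0)
    (hball : ∀ n, ∫⁻ x, (ENNReal.ofReal |bA T f n x| / c) ^ (q x) ∂μ ≤ 1) :
    ∫⁻ x, (ENNReal.ofReal |fav x| / c) ^ (q x) ∂μ ≤ 1 := by
  have hbA_meas : ∀ n, Measurable fun x => bA T f n x := fun n =>
    (Finset.measurable_sum _ fun j _ => hf.comp (hT.measurable.iterate j)).const_mul _
  have hmeas_n : ∀ n, Measurable fun x => (ENNReal.ofReal |bA T f n x| / c) ^ (q x) :=
    fun n => (((hbA_meas n).abs.ennreal_ofReal).div measurable_const).pow hq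
  have hptw : (fun x => (ENNReal.ofReal |fav x| / c) ^ (q x)) =ᵐ[μ]
      (fun x => liminf (fun n => (ENNReal.ofReal |bA T f n x| / c) ^ (q x)) atTop) := by
    refine hconv.mono fun x hx => ?_
    have h1 : Tendsto (fun n => ENNReal.ofReal |bA T f n x|) atTop
        (𝓝 (ENNReal.ofReal |fav x|)) :=
      (ENNReal.continuous_ofReal.tendsto _).comp ((continuous_abs.tendsto _).comp hx)
    have h2 : Tendsto (fun n => ENNReal.ofReal |bA T f n x| / c) atTop
        (𝓝 (ENNReal.ofReal |fav x| / c)) := ENNReal.Tendsto.div_const h1 (Or.inr hc)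
    have h3 : Tendsto (fun n => (ENNReal.ofReal |bA T f n x| / c) ^ (q x)) atTop
        (𝓝 ((ENNReal.ofReal |fav x| / c) ^ (q x))) :=
      (ENNReal.continuous_rpow_const.tendsto _).comp h2
    exact h3.liminf_eq.symm
  calc ∫⁻ x, (ENNReal.ofReal |fav x| / c) ^ (q x) ∂μ
      = ∫⁻ x, liminf (fun n => (ENNReal.ofReal |bA T f n x| / c) ^ (q x)) atTop ∂μ :=
        lintegral_congr_ae hptw
    _ ≤ liminf (fun n => ∫⁻ x, (ENNReal.ofReal |bA T f n x| / c) ^ (q x) ∂μ) atTop :=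
        lintegral_liminf_le hmeas_n
    _ ≤ 1 := liminf_le_of_frequently_le' (Frequently.of_forall hball)


lemma luxNorm_fav_le (hT : MeasurePreserving T μ μ) {f fav : Ω → ℝ} (hf : Measurable f)
    {q : Ω → ℝ} (hq : Measurable q) (hq1 : ∀ᵐ x ∂μ, 1 ≤ q x) (hqT : q ∘ T =ᵐ[μ] q)
    (hconv : ∀ᵐ x ∂μ, Tendsto (fun n => bA T f n x) atTop (𝓝 (fav x))) :
    luxNorm μ q fav ≤ luxNorm μ q f := by
  refine sInf_le_sInf ?_
  rintro c ⟨hc, hint⟩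
  refine ⟨hc, ?_⟩
  exact modular_fav_le hT hf hq hconv hc.ne'
    (fun n => modular_bA_le hT hf hq hq1 hqT hint n)

lemma ae_essInf_le' {p : Ω → ℝ} (h : 0 < essInf p μ) : ∀ᵐ x ∂μ, essInf p μ ≤ p x := by
  by_cases hb : IsBoundedUnder (· ≥ ·) (ae μ) p
  · exact ae_essInf_le hb
  · exfalso
    refine h.ne' ?_
    have hempty : {a : ℝ | ∀ᶠ x in ae μ, a ≤ p x} = ∅ := by
      rw [Set.eq_empty_iff_forall_notMem]
      intro a ha
      exact hb ⟨a, ha⟩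
    rw [essInf, Filter.liminf_eq, hempty, Real.sSup_empty]

/-- finite Luxemburg norm with exponent a.e. ≥ 1 implies integrable. -/
lemma integrable_of_luxNorm_lt_top {f : Ω → ℝ} (hf : Measurable f) {q : Ω → ℝ}
    (hq1 : ∀ᵐ x ∂μ, 1 ≤ q x) (hfin : luxNorm μ q f < ⊤) : Integrable f μ := by
  obtain ⟨c, ⟨hc0, hint⟩, hctop⟩ := sInf_lt_iff.mp hfin
  have hptw : ∀ᵐ x ∂μ, ENNReal.ofReal |f x| ≤
      c * max 1 ((ENNReal.ofReal |f x| / c) ^ (q x)) := by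
    refine hq1.mono fun x hx => ?_
    set a := ENNReal.ofReal |f x| with ha
    rcases le_total a c with h | h
    · calc a ≤ c := h
        _ = c * 1 := (mul_one c).symm
        _ ≤ c * max 1 ((a / c) ^ (q x)) := mul_le_mul_right (le_max_left _ _) c
    · have h1 : 1 ≤ a / c := ENNReal.le_div_iff_mul_le (Or.inl hc0.ne') (Or.inl hctop.ne)
        |>.mpr (by rwa [one_mul])
      have h2 : a / c ≤ (a / c) ^ (q x) := by
        calc a / c = (a / c) ^ (1:ℝ) := (ENNReal.rpow_one _).symm
          _ ≤ (a / c) ^ (q x) := ENNReal.rpow_le_rpow_of_exponent_le h1 hx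
      calc a = c * (a / c) := (ENNReal.mul_div_cancel hc0.ne' hctop.ne).symm
        _ ≤ c * ((a / c) ^ (q x)) := mul_le_mul_right h2 c
        _ ≤ c * max 1 ((a / c) ^ (q x)) := mul_le_mul_right (le_max_right _ _) c
  have hbound : ∫⁻ x, ENNReal.ofReal |f x| ∂μ ≤ 2 * c := by
    calc ∫⁻ x, ENNReal.ofReal |f x| ∂μ
        ≤ ∫⁻ x, c * max 1 ((ENNReal.ofReal |f x| / c) ^ (q x)) ∂μ := lintegral_mono_ae hptw
      _ ≤ ∫⁻ x, c * (1 + (ENNReal.ofReal |f x| / c) ^ (q x)) ∂μ := by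
          refine lintegral_mono fun x => mul_le_mul_right (max_le le_self_add le_add_self) c
      _ = c * ∫⁻ x, (1 + (ENNReal.ofReal |f x| / c) ^ (q x)) ∂μ :=
          lintegral_const_mul' _ _ hctop.ne
      _ ≤ c * (1 + 1) := by
          refine mul_le_mul_right ?_ c
          rw [lintegral_add_left measurable_const]
          simp only [lintegral_const, one_mul, measure_univ, mul_one]
          exact add_le_add le_rfl hint
      _ = 2 * c := by ring
  refine ⟨hf.aestronglyMeasurable, ?_⟩
  rw [hasFiniteIntegral_iff_norm]
  simp only [Real.norm_eq_abs]
  exact lt_of_le_of_lt hbound (by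
    exact ENNReal.mul_lt_top (by norm_num) hctop)

end All
theorem birkhoff_limit_in_grand_space
    {Ω : Type*} [MeasurableSpace Ω] (μ : Measure Ω) [IsProbabilityMeasure μ]
    (T : Ω → Ω) (hT : MeasurePreserving T μ μ)
    (p : Ω → ℝ) (hp : Measurable p) (hp1 : 1 < essInf p μ)
    (hpT : p ∘ T =ᵐ[μ] p)
    (θ : ℝ) (hθ : 0 < θ)
    (f : Ω → ℝ) (hf : Measurable f) (hfin : grandNorm μ p θ f < ⊤) :
    ∃ fav : Ω → ℝ,
      (∀ᵐ x ∂μ, Tendsto (fun n : ℕ => (n : ℝ)⁻¹ * ∑ j ∈ Finset.range n, f (T^[j] x))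
        atTop (𝓝 (fav x))) ∧
      grandNorm μ p θ fav ≤ grandNorm μ p θ f := by
  set e := essInf p μ with he
  have hple : ∀ᵐ x ∂μ, e ≤ p x := ae_essInf_le' (by linarith)
  set ε₀ : ℝ := (e - 1) / 2 with hε₀def
  have hε₀ : ε₀ ∈ Set.Ioo (0:ℝ) (e - 1) := ⟨by simp [hε₀def]; linarith, by simp [hε₀def]; linarith⟩
  have hq₀1 : ∀ᵐ x ∂μ, 1 ≤ p x - ε₀ := hple.mono fun x hx => by
    simp only [hε₀def]; linarith
  -- extract finiteness of one Luxemburg norm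
  have hterm : ENNReal.ofReal (ε₀ ^ (θ / (e - ε₀))) * luxNorm μ (fun x => p x - ε₀) f
      ≤ grandNorm μ p θ f := by
    rw [grandNorm]
    exact le_iSup₂ (f := fun ε (_ : ε ∈ Set.Ioo (0:ℝ) (e - 1)) =>
      ENNReal.ofReal (ε ^ (θ / (e - ε))) * luxNorm μ (fun x => p x - ε) f) ε₀ hε₀
  have hcoef : (0:ℝ≥0∞) < ENNReal.ofReal (ε₀ ^ (θ / (e - ε₀))) :=
    ENNReal.ofReal_pos.mpr (Real.rpow_pos_of_pos hε₀.1 _)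
  have hlux_fin : luxNorm μ (fun x => p x - ε₀) f < ⊤ := by
    by_contra htop
    push_neg at htop
    have : ENNReal.ofReal (ε₀ ^ (θ / (e - ε₀))) * luxNorm μ (fun x => p x - ε₀) f = ⊤ := by
      rw [top_le_iff.mp htop, ENNReal.mul_top hcoef.ne']
    rw [this] at hterm
    exact absurd (top_le_iff.mp hterm) hfin.ne
  have hfi : Integrable f μ := integrable_of_luxNorm_lt_top hf hq₀1 hlux_fin
  obtain ⟨fav, hconv⟩ := birkhoff_ae hT hf hfi
  refine ⟨fav, ?_, ?_⟩
  · exact hconv.mono fun x hx => by simpa [bA, bS] using hx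
  · rw [grandNorm, grandNorm]
    refine iSup₂_mono fun ε hε => ?_
    refine mul_le_mul_right ?_ _
    refine luxNorm_fav_le hT hf (hp.sub measurable_const) ?_ ?_ hconv
    · exact hple.mono fun x hx => by
        obtain ⟨h1, h2⟩ := hε
        linarith
    · exact hpT.mono fun x hx => by
        simp only [Function.comp_apply] at hx ⊢
        rw [hx]
end

section
/- Let (Ω, Σ, μ) be a probability space, T measure-preserving, p a T-invariant measurable exponent with 1 < p⁻ ≤ p⁺ < ∞, and ε ∈ (0, p⁻ − 1). Then for every f ∈ L^{p(·),θ}(Ω), the Birkhoff limit f_av satisfies the modular inequality ∫_Ω |f_av(x)|^{p(x)−ε} dμ ≤ ∫_Ω |f(x)|^{p(x)−ε} dμ. -/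
open MeasureTheory ENNReal Filter Topology

theorem birkhoff_limit_modular_inequality
    {Ω : Type*} [MeasurableSpace Ω] (μ : Measure Ω) [IsProbabilityMeasure μ]
    (T : Ω → Ω) (hT : MeasurePreserving T μ μ)
    (p : Ω → ℝ) (hp : Measurable p) (hp1 : 1 < essInf p μ)
    (hpT : p ∘ T =ᵐ[μ] p)
    (θ : ℝ) (hθ : 0 < θ)
    (ε : ℝ) (hε : ε ∈ Set.Ioo (0:ℝ) (essInf p μ - 1))
    (f : Ω → ℝ) (hf : Measurable f) (hfin : grandNorm μ p θ f < ⊤)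
    (fav : Ω → ℝ) (hfav : Measurable fav)
    (hlim : ∀ᵐ x ∂μ, Tendsto (fun n : ℕ => (n : ℝ)⁻¹ * ∑ j ∈ Finset.range n, f (T^[j] x))
      atTop (𝓝 (fav x))) :
    ∫⁻ x, (ENNReal.ofReal |fav x|) ^ (p x - ε) ∂μ ≤
      ∫⁻ x, (ENNReal.ofReal |f x|) ^ (p x - ε) ∂μ := by
  -- boundedness of p below (a.e.)
  have hbdd : IsBoundedUnder (· ≥ ·) (ae μ) p := by
    by_contra h
    have h0 : essInf p μ = 0 := by
      rw [essInf, liminf_eq]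
      have : {a : ℝ | ∀ᶠ x in ae μ, a ≤ p x} = ∅ := by
        ext a
        simp only [Set.mem_setOf_eq, Set.mem_empty_iff_false, iff_false]
        intro ha
        exact h ⟨a, eventually_map.2 ha⟩
      rw [this, Real.sSup_empty]
    rw [h0] at hp1; linarith
  have hε0 : 0 < ε := hε.1
  have hε2 : 1 + ε < essInf p μ := by have := hε.2; linarith
  have hq1 : ∀ᵐ x ∂μ, 1 < p x - ε := by
    filter_upwards [ae_lt_of_lt_essInf hε2 hbdd] with x hx
    linarith
  -- T-iterates preserve p a.e.
  have hpj : ∀ j : ℕ, p ∘ T^[j] =ᵐ[μ] p := by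
    intro j
    induction j with
    | zero => simp [Function.iterate_zero]
    | succ j ih =>
      have h1 : (p ∘ T^[j]) ∘ T =ᵐ[μ] p ∘ T :=
        hT.quasiMeasurePreserving.ae_eq_comp ih
      have h2 : p ∘ T^[j+1] = (p ∘ T^[j]) ∘ T := by
        ext x; simp [Function.iterate_succ_apply, Function.comp]
      rw [h2]
      exact h1.trans hpT
  have hpj' : ∀ᵐ x ∂μ, ∀ j : ℕ, p (T^[j] x) = p x := by
    rw [ae_all_iff]; exact fun j => hpj j
  -- the averaged power functions
  set F : ℕ → Ω → ℝ≥0∞ := fun n x =>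
    (n : ℝ≥0∞)⁻¹ * ∑ j ∈ Finset.range n, (ENNReal.ofReal |f (T^[j] x)|) ^ (p x - ε) with hF
  have hFmeas : ∀ n, Measurable (F n) := by
    intro n
    apply Measurable.const_mul
    apply Finset.measurable_sum
    intro j _
    exact ((measurable_ofReal.comp ((hf.comp (hT.measurable.iterate j)).abs)).pow
      (hp.sub measurable_const))
  -- pointwise a.e. inequality
  have hpt : ∀ᵐ x ∂μ, (ENNReal.ofReal |fav x|) ^ (p x - ε) ≤ liminf (fun n => F n x) atTop := by
    filter_upwards [hq1, hlim] with x hx1 hxl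
    set q := p x - ε with hqdef
    have hq0 : (0:ℝ) ≤ q := by linarith
    -- tendsto of powers
    have h1 : Tendsto (fun n : ℕ =>
        (ENNReal.ofReal |(n : ℝ)⁻¹ * ∑ j ∈ Finset.range n, f (T^[j] x)|) ^ q) atTop
        (𝓝 ((ENNReal.ofReal |fav x|) ^ q)) := by
      apply (ENNReal.continuous_rpow_const.tendsto _).comp
      exact (ENNReal.continuous_ofReal.tendsto _).comp (hxl.abs)
    have h2 : ∀ᶠ n : ℕ in atTop,
        (ENNReal.ofReal |(n : ℝ)⁻¹ * ∑ j ∈ Finset.range n, f (T^[j] x)|) ^ q ≤ F n x := by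
      filter_upwards [eventually_ge_atTop 1] with n hn
      have hn0 : (n : ℝ≥0∞) ≠ 0 := Nat.cast_ne_zero.mpr (Nat.one_le_iff_ne_zero.mp hn)
      have hntop : (n : ℝ≥0∞) ≠ ⊤ := natCast_ne_top n
      -- step 1: |avg| ≤ avg of abs, in ENNReal
      have e1 : ENNReal.ofReal |(n : ℝ)⁻¹ * ∑ j ∈ Finset.range n, f (T^[j] x)| ≤
          ∑ j ∈ Finset.range n, (n : ℝ≥0∞)⁻¹ * ENNReal.ofReal |f (T^[j] x)| := by
        rw [← Finset.mul_sum]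
        have : |(n : ℝ)⁻¹ * ∑ j ∈ Finset.range n, f (T^[j] x)| ≤
            (n : ℝ)⁻¹ * ∑ j ∈ Finset.range n, |f (T^[j] x)| := by
          rw [abs_mul, abs_inv, Nat.abs_cast]
          gcongr
          exact Finset.abs_sum_le_sum_abs _ _
        calc ENNReal.ofReal |(n : ℝ)⁻¹ * ∑ j ∈ Finset.range n, f (T^[j] x)|
            ≤ ENNReal.ofReal ((n : ℝ)⁻¹ * ∑ j ∈ Finset.range n, |f (T^[j] x)|) :=
              ENNReal.ofReal_le_ofReal this
          _ = (n : ℝ≥0∞)⁻¹ * ∑ j ∈ Finset.range n, ENNReal.ofReal |f (T^[j] x)| := by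
              rw [ENNReal.ofReal_mul (by positivity), ENNReal.ofReal_sum_of_nonneg
                (fun j _ => abs_nonneg _), ENNReal.ofReal_inv_of_pos (by positivity),
                ENNReal.ofReal_natCast]
      have hw : ∑ _j ∈ Finset.range n, (n : ℝ≥0∞)⁻¹ = 1 := by
        rw [Finset.sum_const, Finset.card_range, nsmul_eq_mul, ENNReal.mul_inv_cancel hn0 hntop]
      calc (ENNReal.ofReal |(n : ℝ)⁻¹ * ∑ j ∈ Finset.range n, f (T^[j] x)|) ^ q
          ≤ (∑ j ∈ Finset.range n, (n : ℝ≥0∞)⁻¹ * ENNReal.ofReal |f (T^[j] x)|) ^ q :=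
            ENNReal.rpow_le_rpow e1 hq0
        _ ≤ ∑ j ∈ Finset.range n, (n : ℝ≥0∞)⁻¹ * (ENNReal.ofReal |f (T^[j] x)|) ^ q :=
            ENNReal.rpow_arith_mean_le_arith_mean_rpow (Finset.range n) _ _ hw hx1.le
        _ = F n x := by rw [hF]; simp [Finset.mul_sum, hqdef]
    calc (ENNReal.ofReal |fav x|) ^ q
        = liminf (fun n : ℕ =>
            (ENNReal.ofReal |(n : ℝ)⁻¹ * ∑ j ∈ Finset.range n, f (T^[j] x)|) ^ q) atTop :=
          (h1.liminf_eq).symm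
      _ ≤ liminf (fun n => F n x) atTop := liminf_le_liminf h2
  -- value of each integral
  have hint : ∀ j : ℕ, ∫⁻ x, (ENNReal.ofReal |f (T^[j] x)|) ^ (p x - ε) ∂μ =
      ∫⁻ x, (ENNReal.ofReal |f x|) ^ (p x - ε) ∂μ := by
    intro j
    have e1 : ∫⁻ x, (ENNReal.ofReal |f (T^[j] x)|) ^ (p x - ε) ∂μ =
        ∫⁻ x, (ENNReal.ofReal |f (T^[j] x)|) ^ (p (T^[j] x) - ε) ∂μ := by
      apply lintegral_congr_ae
      filter_upwards [hpj j] with x hx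
      rw [show p (T^[j] x) = p x from hx]
    rw [e1]
    exact (hT.iterate j).lintegral_comp
      ((measurable_ofReal.comp hf.abs).pow (hp.sub measurable_const))
  -- integral of F n
  have hFint : ∀ n : ℕ, 1 ≤ n → ∫⁻ x, F n x ∂μ =
      ∫⁻ x, (ENNReal.ofReal |f x|) ^ (p x - ε) ∂μ := by
    intro n hn
    rw [hF]
    simp only
    rw [lintegral_const_mul _ (by
      apply Finset.measurable_sum
      intro j _
      exact ((measurable_ofReal.comp ((hf.comp (hT.measurable.iterate j)).abs)).pow
        (hp.sub measurable_const)))]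
    rw [lintegral_finset_sum (Finset.range n) (fun j _ =>
      show Measurable fun x => (ENNReal.ofReal |f (T^[j] x)|) ^ (p x - ε) from
      (measurable_ofReal.comp ((hf.comp (hT.measurable.iterate j)).abs)).pow
        (hp.sub measurable_const))]
    rw [Finset.sum_congr rfl (fun j _ => hint j), Finset.sum_const, Finset.card_range,
      nsmul_eq_mul, ← mul_assoc, ENNReal.inv_mul_cancel
        (by exact_mod_cast Nat.one_le_iff_ne_zero.mp hn) (natCast_ne_top n), one_mul]
  calc ∫⁻ x, (ENNReal.ofReal |fav x|) ^ (p x - ε) ∂μ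
      ≤ ∫⁻ x, liminf (fun n => F n x) atTop ∂μ := lintegral_mono_ae hpt
    _ ≤ liminf (fun n => ∫⁻ x, F n x ∂μ) atTop := lintegral_liminf_le hFmeas
    _ = ∫⁻ x, (ENNReal.ofReal |f x|) ^ (p x - ε) ∂μ := by
        have : ∀ᶠ n : ℕ in atTop, (fun n => ∫⁻ x, F n x ∂μ) n =
            ∫⁻ x, (ENNReal.ofReal |f x|) ^ (p x - ε) ∂μ := by
          filter_upwards [eventually_ge_atTop 1] with n hn
          exact hFint n hn
        rw [liminf_congr this, liminf_const]
end
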